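/- Let G = (V, E) be a finite simple undirected graph with non-negative edge weights w : E → ℕ, let M be a minimum-weight perfect matching of G, let r ≥ w(M) be an integer, define w' : E → ℤ by w'(e) = −w(e) − r − 1 for e ∈ M and w'(e) = w(e) + r + 1 for e ∉ M, and let C₁, …, C_p be pairwise vertex-disjoint M-alternating cycles in G. Then M Δ C₁ Δ ⋯ Δ C_p is a perfect matching of G and w(M Δ C₁ Δ ⋯ Δ C_p) = w(M) + Σᵢ w'(Cᵢ). -/

import Mathlib

open scoped symmDiff

variable {V : Type} [Fintype V] [DecidableEq V]

/-- A perfect matching of a graph `G`, viewed as a finite set of edges: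
every edge belongs to `G` and every vertex lies in exactly one edge of `M`. -/
def IsPM (G : SimpleGraph V) (M : Finset (Sym2 V)) : Prop :=
  (∀ e ∈ M, e ∈ G.edgeSet) ∧ ∀ v : V, ∃! e, e ∈ M ∧ v ∈ e

/-- The total weight of a set of edges. -/
def wt (w : Sym2 V → ℤ) (X : Finset (Sym2 V)) : ℤ := ∑ e ∈ X, w e

/-- The total weight of (the edge set of) a closed walk. -/
def cycWt {G : SimpleGraph V} (w : Sym2 V → ℤ) {v : V} (c : G.Walk v v) : ℤ :=
  (c.edges.map w).sum

/-- A cycle `c` is `M`-alternating: its edges alternate (cyclically) between edges in `M`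
and edges not in `M`; equivalently, every vertex of the cycle lies in exactly one edge of
the cycle that belongs to `M`. -/
def IsAltCycle (G : SimpleGraph V) (M : Finset (Sym2 V)) {v : V} (c : G.Walk v v) : Prop :=
  c.IsCycle ∧ ∀ u ∈ c.support, ∃! e, e ∈ c.edges ∧ u ∈ e ∧ e ∈ M

instance : Std.Commutative (α := Finset (Sym2 V)) (· ∆ ·) := ⟨symmDiff_comm⟩
instance : Std.Associative (α := Finset (Sym2 V)) (· ∆ ·) := ⟨symmDiff_assoc⟩

set_option linter.unusedSectionVars false

private lemma mem_support_of_mem_edge {G : SimpleGraph V} {x y : V} (p : G.Walk x y)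
    {e : Sym2 V} (he : e ∈ p.edges) {u : V} (hu : u ∈ e) : u ∈ p.support := by
  induction e with
  | h a b =>
    rcases Sym2.mem_iff.mp hu with rfl | rfl
    · exact p.fst_mem_support_of_mem_edges he
    · exact p.snd_mem_support_of_mem_edges he

private lemma path_start_unique_edge {G : SimpleGraph V} {x y : V} {p : G.Walk x y}
    (hp : p.IsPath) (hxy : x ≠ y) : ∃! e, e ∈ p.edges ∧ x ∈ e := by
  cases p with
  | nil => exact absurd rfl hxy
  | @cons _ b _ h q =>
    rw [SimpleGraph.Walk.cons_isPath_iff] at hp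
    refine ⟨s(x, b), ⟨List.mem_cons_self, Sym2.mem_mk_left x b⟩, ?_⟩
    rintro e ⟨he, hxe⟩
    rcases List.mem_cons.mp he with rfl | he'
    · rfl
    · exact absurd (mem_support_of_mem_edge q he' hxe) hp.2

private lemma cycle_two_edges_start {G : SimpleGraph V} {u : V} (d : G.Walk u u)
    (hd : d.IsCycle) :
    ∃ e₁ e₂, e₁ ≠ e₂ ∧ (e₁ ∈ d.edges ∧ u ∈ e₁) ∧ (e₂ ∈ d.edges ∧ u ∈ e₂) ∧
      ∀ e ∈ d.edges, u ∈ e → e = e₁ ∨ e = e₂ := by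
  cases d with
  | nil => exact absurd rfl hd.ne_nil
  | @cons _ b _ h q =>
    obtain ⟨hq, hnotin⟩ := (SimpleGraph.Walk.cons_isCycle_iff q h).mp hd
    have hbu : u ≠ b := h.ne
    have hrev : q.reverse.IsPath := hq.reverse
    obtain ⟨e₂, ⟨h2e, h2u⟩, h2uniq⟩ := path_start_unique_edge hrev hbu
    rw [SimpleGraph.Walk.edges_reverse, List.mem_reverse] at h2e
    refine ⟨s(u, b), e₂, ?_, ⟨List.mem_cons_self, Sym2.mem_mk_left u b⟩,
      ⟨List.mem_cons_of_mem _ h2e, h2u⟩, ?_⟩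
    · rintro rfl; exact hnotin h2e
    · rintro e he hue
      rcases List.mem_cons.mp he with rfl | he'
      · exact Or.inl rfl
      · refine Or.inr (h2uniq e ⟨?_, hue⟩)
        rw [SimpleGraph.Walk.edges_reverse, List.mem_reverse]; exact he'

private lemma cycle_two_edges {G : SimpleGraph V} {v u : V} {c : G.Walk v v}
    (hc : c.IsCycle) (hu : u ∈ c.support) :
    ∃ e₁ e₂, e₁ ≠ e₂ ∧ (e₁ ∈ c.edges ∧ u ∈ e₁) ∧ (e₂ ∈ c.edges ∧ u ∈ e₂) ∧
      ∀ e ∈ c.edges, u ∈ e → e = e₁ ∨ e = e₂ := by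
  obtain ⟨e₁, e₂, hne, ⟨h1e, h1u⟩, ⟨h2e, h2u⟩, hall⟩ :=
    cycle_two_edges_start (c.rotate u hu) (hc.rotate hu)
  have hmem : ∀ e : Sym2 V, e ∈ (c.rotate u hu).edges ↔ e ∈ c.edges :=
    fun e => (c.rotate_edges u hu).mem_iff
  exact ⟨e₁, e₂, hne, ⟨(hmem e₁).mp h1e, h1u⟩, ⟨(hmem e₂).mp h2e, h2u⟩,
    fun e he hue => hall e ((hmem e).mpr he) hue⟩

private lemma alt_other_edge {G : SimpleGraph V} {N : Finset (Sym2 V)} {v : V}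
    {c : G.Walk v v} (hc : IsAltCycle G N c) {u : V} (hu : u ∈ c.support) :
    ∃! e, e ∈ c.edges ∧ u ∈ e ∧ e ∉ N := by
  obtain ⟨e₁, e₂, hne, ⟨h1e, h1u⟩, ⟨h2e, h2u⟩, hall⟩ := cycle_two_edges hc.1 hu
  obtain ⟨eN, ⟨heNc, heNu, heNN⟩, huniq⟩ := hc.2 u hu
  rcases hall eN heNc heNu with rfl | rfl
  · -- eN = e₁, so e₂ ∉ N
    have h2N : e₂ ∉ N := fun hmem => hne ((huniq e₂ ⟨h2e, h2u, hmem⟩).symm)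
    refine ⟨e₂, ⟨h2e, h2u, h2N⟩, ?_⟩
    rintro e ⟨he, hue, henN⟩
    rcases hall e he hue with rfl | rfl
    · exact absurd heNN henN
    · rfl
  · have h1N : e₁ ∉ N := fun hmem => hne (huniq e₁ ⟨h1e, h1u, hmem⟩)
    refine ⟨e₁, ⟨h1e, h1u, h1N⟩, ?_⟩
    rintro e ⟨he, hue, henN⟩
    rcases hall e he hue with rfl | rfl
    · rfl
    · exact absurd heNN henN

private lemma card_double {G : SimpleGraph V} {x y : V} {c : G.Walk x y}
    (P : Finset (Sym2 V)) (hP : ∀ e ∈ P, e ∈ c.edges)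
    (hP2 : ∀ u ∈ c.support, ∃! e, e ∈ P ∧ u ∈ e) :
    c.support.toFinset.card = 2 * P.card := by
  set S := c.support.toFinset with hS
  have hU : S = P.biUnion (fun e => S.filter (· ∈ e)) := by
    ext u
    simp only [Finset.mem_biUnion, Finset.mem_filter]
    constructor
    · intro hu
      obtain ⟨e, ⟨heP, hue⟩, -⟩ := hP2 u (by simpa [hS] using hu)
      exact ⟨e, heP, hu, hue⟩
    · rintro ⟨e, -, hu, -⟩; exact hu
  have hdisj : ∀ e ∈ P, ∀ e' ∈ P, e ≠ e' →
      Disjoint (S.filter (· ∈ e)) (S.filter (· ∈ e')) := by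
    intro e he e' he' hne
    rw [Finset.disjoint_left]
    intro u hue hue'
    rw [Finset.mem_filter] at hue hue'
    obtain ⟨g, -, hg⟩ := hP2 u (by simpa [hS] using hue.1)
    exact hne ((hg e ⟨he, hue.2⟩).trans (hg e' ⟨he', hue'.2⟩).symm)
  have hcards : ∀ e ∈ P, (S.filter (· ∈ e)).card = 2 := by
    intro e
    induction e with
    | h p q =>
      intro he
      have hedge : s(p, q) ∈ G.edgeSet := c.edges_subset_edgeSet (hP _ he)
      have hpq : p ≠ q := by
        intro h; exact G.not_isDiag_of_mem_edgeSet hedge (by simp [h])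
      have : S.filter (· ∈ s(p, q)) = {p, q} := by
        ext u
        simp only [Finset.mem_filter, Finset.mem_insert, Finset.mem_singleton,
          Sym2.mem_iff, hS, List.mem_toFinset]
        constructor
        · rintro ⟨-, h | h⟩ <;> [exact Or.inl h; exact Or.inr h]
        · rintro (h | h)
          · refine ⟨?_, Or.inl h⟩
            rw [h]
            exact mem_support_of_mem_edge c (hP _ he) (Sym2.mem_mk_left p q)
          · refine ⟨?_, Or.inr h⟩
            rw [h]
            exact mem_support_of_mem_edge c (hP _ he) (Sym2.mem_mk_right p q)
      rw [this, Finset.card_insert_of_notMem (by simp [hpq]), Finset.card_singleton]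
  rw [hU, Finset.card_biUnion hdisj, Finset.sum_congr rfl hcards]
  simp [mul_comm]

private lemma switch_wt (w : Sym2 V → ℤ) (N C : Finset (Sym2 V)) :
    wt w (N ∆ C) = wt w N + wt w (C \ N) - wt w (C ∩ N) := by
  have h1 : wt w (N ∆ C) = wt w (N \ C) + wt w (C \ N) := by
    rw [symmDiff_def]
    exact Finset.sum_union disjoint_sdiff_sdiff
  have h2 : wt w (N ∩ C) + wt w (N \ C) = wt w N :=
    Finset.sum_inter_add_sum_sdiff N C w
  have h3 : C ∩ N = N ∩ C := Finset.inter_comm C N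
  rw [h1, h3]
  unfold wt at *
  omega

private lemma switch_pm {G : SimpleGraph V} {N : Finset (Sym2 V)} (hN : IsPM G N)
    {v : V} {c : G.Walk v v} (hc : IsAltCycle G N c) :
    IsPM G (N ∆ c.edges.toFinset) := by
  constructor
  · intro e he
    rcases Finset.mem_symmDiff.mp he with ⟨h, -⟩ | ⟨h, -⟩
    · exact hN.1 e h
    · exact c.edges_subset_edgeSet (List.mem_toFinset.mp h)
  · intro u
    have hNedge : ∀ f ∈ N, ∀ g ∈ N, u ∈ f → u ∈ g → f = g := by
      intro f hf g hg huf hug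
      obtain ⟨e0, -, h0⟩ := hN.2 u
      exact (h0 f ⟨hf, huf⟩).trans (h0 g ⟨hg, hug⟩).symm
    by_cases hu : u ∈ c.support
    · obtain ⟨eN, ⟨heNc, heNu, heNN⟩, -⟩ := hc.2 u hu
      obtain ⟨e₂, ⟨h2c, h2u, h2N⟩, huniq2⟩ := alt_other_edge hc hu
      refine ⟨e₂, ⟨Finset.mem_symmDiff.mpr (Or.inr ⟨List.mem_toFinset.mpr h2c, h2N⟩), h2u⟩, ?_⟩
      rintro f ⟨hf, huf⟩
      rcases Finset.mem_symmDiff.mp hf with ⟨hfN, hfC⟩ | ⟨hfC, hfN⟩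
      · exact absurd (List.mem_toFinset.mpr ((hNedge f hfN eN heNN huf heNu) ▸ heNc)) hfC
      · exact huniq2 f ⟨List.mem_toFinset.mp hfC, huf, hfN⟩
    · obtain ⟨eN, ⟨heNN, heNu⟩, huniqN⟩ := hN.2 u
      have heNC : eN ∉ c.edges.toFinset := by
        intro h
        exact hu (mem_support_of_mem_edge c (List.mem_toFinset.mp h) heNu)
      refine ⟨eN, ⟨Finset.mem_symmDiff.mpr (Or.inl ⟨heNN, heNC⟩), heNu⟩, ?_⟩
      rintro f ⟨hf, huf⟩
      rcases Finset.mem_symmDiff.mp hf with ⟨hfN, -⟩ | ⟨hfC, -⟩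
      · exact huniqN f ⟨hfN, huf⟩
      · exact absurd (mem_support_of_mem_edge c (List.mem_toFinset.mp hfC) huf) hu

private lemma main_ind {G : SimpleGraph V} (w : Sym2 V → ℤ) {M : Finset (Sym2 V)}
    (hM : IsPM G M) {p : ℕ} {a : Fin p → V} {c : ∀ i, G.Walk (a i) (a i)}
    (halt : ∀ i, IsAltCycle G M (c i))
    (hdisj : ∀ i j, i ≠ j → ∀ u, u ∈ (c i).support → u ∉ (c j).support)
    (s : Finset (Fin p)) :
    IsPM G (s.fold ((· ∆ ·) : Finset (Sym2 V) → _ → _) M (fun i => (c i).edges.toFinset)) ∧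
    (∀ u : V, (∀ j ∈ s, u ∉ (c j).support) →
      ∀ e, u ∈ e → (e ∈ s.fold ((· ∆ ·) : Finset (Sym2 V) → _ → _) M (fun i => (c i).edges.toFinset) ↔ e ∈ M)) ∧
    wt w (s.fold ((· ∆ ·) : Finset (Sym2 V) → _ → _) M (fun i => (c i).edges.toFinset)) =
      wt w M + ∑ i ∈ s,
        (wt w ((c i).edges.toFinset \ M) - wt w ((c i).edges.toFinset ∩ M)) := by
  induction s using Finset.induction_on with
  | empty =>
    simp only [Finset.fold_empty, Finset.sum_empty, add_zero, Finset.notMem_empty]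
    exact ⟨hM, fun u _ e _ => trivial, trivial⟩
  | @insert i s hi ih =>
    obtain ⟨hNpm, hNag, hNwt⟩ := ih
    set N := s.fold ((· ∆ ·) : Finset (Sym2 V) → _ → _) M (fun i => (c i).edges.toFinset) with hNdef
    have hfold : (insert i s).fold ((· ∆ ·) : Finset (Sym2 V) → _ → _) M (fun i => (c i).edges.toFinset)
        = (c i).edges.toFinset ∆ N := Finset.fold_insert hi
    have key : ∀ e ∈ (c i).edges, (e ∈ N ↔ e ∈ M) := by
      intro e he
      induction e with
      | h x y =>
        have hx : x ∈ (c i).support :=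
          mem_support_of_mem_edge (c i) he (Sym2.mem_mk_left x y)
        exact hNag x (fun j hj => hdisj i j (fun h => hi (h ▸ hj)) x hx) s(x, y)
          (Sym2.mem_mk_left x y)
    have hinter : (c i).edges.toFinset ∩ N = (c i).edges.toFinset ∩ M := by
      ext e
      simp only [Finset.mem_inter, List.mem_toFinset]
      exact and_congr_right fun he => key e he
    have hsd : (c i).edges.toFinset \ N = (c i).edges.toFinset \ M := by
      ext e
      simp only [Finset.mem_sdiff, List.mem_toFinset]
      exact and_congr_right fun he => not_congr (key e he)
    have haltN : IsAltCycle G N (c i) := by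
      refine ⟨(halt i).1, fun u hu => ?_⟩
      obtain ⟨e, ⟨h1, h2, h3⟩, huniq⟩ := (halt i).2 u hu
      exact ⟨e, ⟨h1, h2, (key e h1).mpr h3⟩,
        fun e' ⟨g1, g2, g3⟩ => huniq e' ⟨g1, g2, (key e' g1).mp g3⟩⟩
    refine ⟨?_, ?_, ?_⟩
    · rw [hfold, symmDiff_comm]
      exact switch_pm hNpm haltN
    · intro u hu e hue
      have huci : u ∉ (c i).support := hu i (Finset.mem_insert_self i s)
      have heC : e ∉ (c i).edges.toFinset := by
        intro h
        exact huci (mem_support_of_mem_edge (c i) (List.mem_toFinset.mp h) hue)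
      rw [hfold]
      have : e ∈ (c i).edges.toFinset ∆ N ↔ e ∈ N := by
        rw [Finset.mem_symmDiff]
        constructor
        · rintro (⟨h, -⟩ | ⟨h, -⟩)
          · exact absurd h heC
          · exact h
        · intro h; exact Or.inr ⟨h, heC⟩
      rw [this]
      exact hNag u (fun j hj => hu j (Finset.mem_insert_of_mem hj)) e hue
    · rw [hfold, symmDiff_comm, switch_wt w N _, hinter, hsd, hNwt,
        Finset.sum_insert hi]
      ring

/-- **Lemma (switching along disjoint alternating cycles).** Let `M` be a minimum-weight
perfect matching of `G` with non-negative weights `w : E → ℕ`, let `r ≥ w(M)` be an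
integer, define `w'(e) = -w(e) - r - 1` for `e ∈ M` and `w'(e) = w(e) + r + 1` for
`e ∉ M`, and let `C₁, …, C_p` be pairwise vertex-disjoint `M`-alternating cycles of `G`.
Then `M ∆ C₁ ∆ ⋯ ∆ C_p` is a perfect matching of `G` of weight
`w(M) + ∑ᵢ w'(Cᵢ)`. -/
theorem switching_along_disjoint_alternating_cycles (G : SimpleGraph V) (w : Sym2 V → ℕ)
    (M : Finset (Sym2 V)) (hM : IsPM G M)
    (hmin : ∀ M' : Finset (Sym2 V), IsPM G M' →
      wt (fun e => (w e : ℤ)) M ≤ wt (fun e => (w e : ℤ)) M')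
    (r : ℤ) (hr : wt (fun e => (w e : ℤ)) M ≤ r)
    (w' : Sym2 V → ℤ)
    (hw' : ∀ e : Sym2 V,
      w' e = if e ∈ M then -(w e : ℤ) - r - 1 else (w e : ℤ) + r + 1)
    (p : ℕ) (a : Fin p → V) (c : ∀ i : Fin p, G.Walk (a i) (a i))
    (halt : ∀ i : Fin p, IsAltCycle G M (c i))
    (hdisj : ∀ i j : Fin p, i ≠ j → ∀ u : V, u ∈ (c i).support → u ∉ (c j).support) :
    IsPM G (Finset.univ.fold (· ∆ ·) M (fun i : Fin p => (c i).edges.toFinset)) ∧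
      wt (fun e => (w e : ℤ))
          (Finset.univ.fold (· ∆ ·) M (fun i : Fin p => (c i).edges.toFinset)) =
        wt (fun e => (w e : ℤ)) M + ∑ i : Fin p, cycWt w' (c i) := by
  set wZ : Sym2 V → ℤ := fun e => (w e : ℤ) with hwZ
  obtain ⟨hpm, -, hwt⟩ := main_ind wZ hM halt hdisj Finset.univ
  have hcyc : ∀ i : Fin p, cycWt w' (c i) =
      wt wZ ((c i).edges.toFinset \ M) - wt wZ ((c i).edges.toFinset ∩ M) := by
    intro i
    set C := (c i).edges.toFinset with hC
    have hnodup : (c i).edges.Nodup := (halt i).1.edges_nodup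
    have h1 : cycWt w' (c i) = ∑ e ∈ C, w' e := (List.sum_toFinset w' hnodup).symm
    have hsplit : C \ M ∪ C ∩ M = C := Finset.sdiff_union_inter C M
    have hdisj2 : Disjoint (C \ M) (C ∩ M) := Finset.disjoint_sdiff_inter C M
    have h2 : ∑ e ∈ C, w' e = ∑ e ∈ C \ M, w' e + ∑ e ∈ C ∩ M, w' e := by
      rw [← hsplit, Finset.sum_union hdisj2, hsplit]
    have hcard1 : (c i).support.toFinset.card = 2 * (C ∩ M).card := by
      refine card_double (C ∩ M) (fun e he => ?_) (fun u hu => ?_)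
      · exact List.mem_toFinset.mp (Finset.mem_inter.mp he).1
      · obtain ⟨e, ⟨h1', h2', h3'⟩, hun⟩ := (halt i).2 u hu
        refine ⟨e, ⟨Finset.mem_inter.mpr ⟨List.mem_toFinset.mpr h1', h3'⟩, h2'⟩, ?_⟩
        rintro e' ⟨hm, hu'⟩
        obtain ⟨hm1, hm2⟩ := Finset.mem_inter.mp hm
        exact hun e' ⟨List.mem_toFinset.mp hm1, hu', hm2⟩
    have hcard2 : (c i).support.toFinset.card = 2 * (C \ M).card := by
      refine card_double (C \ M) (fun e he => ?_) (fun u hu => ?_)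
      · exact List.mem_toFinset.mp (Finset.mem_sdiff.mp he).1
      · obtain ⟨e, ⟨h1', h2', h3'⟩, hun⟩ := alt_other_edge (halt i) hu
        refine ⟨e, ⟨Finset.mem_sdiff.mpr ⟨List.mem_toFinset.mpr h1', h3'⟩, h2'⟩, ?_⟩
        rintro e' ⟨hm, hu'⟩
        obtain ⟨hm1, hm2⟩ := Finset.mem_sdiff.mp hm
        exact hun e' ⟨List.mem_toFinset.mp hm1, hu', hm2⟩
    have hcc : (C ∩ M).card = (C \ M).card := by omega
    have hA : ∑ e ∈ C ∩ M, w' e = -(wt wZ (C ∩ M)) - (r + 1) * (C ∩ M).card := by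
      have hco : ∀ e ∈ C ∩ M, w' e = -(wZ e) - (r + 1) := by
        intro e he
        rw [hw' e, if_pos (Finset.mem_inter.mp he).2]
        ring
      rw [Finset.sum_congr rfl hco, Finset.sum_sub_distrib, Finset.sum_neg_distrib,
        Finset.sum_const, nsmul_eq_mul, wt]
      ring
    have hB : ∑ e ∈ C \ M, w' e = wt wZ (C \ M) + (r + 1) * (C \ M).card := by
      have hco : ∀ e ∈ C \ M, w' e = wZ e + (r + 1) := by
        intro e he
        rw [hw' e, if_neg (Finset.mem_sdiff.mp he).2]
        ring
      rw [Finset.sum_congr rfl hco, Finset.sum_add_distrib,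
        Finset.sum_const, nsmul_eq_mul, wt]
      ring
    rw [h1, h2, hA, hB, hcc]
    ring
  refine ⟨hpm, ?_⟩
  rw [hwt]
  congr 1
  exact Finset.sum_congr rfl fun i _ => (hcyc i).symm
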